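/- For every n ≥ 1, every m with 0 ≤ m ≤ n, and every k with 0 ≤ k ≤ n, the number of Dyck paths of semilength n with exactly m flaws and exactly k valleys equals the number of Dyck paths of semilength n with exactly n−m flaws and exactly n−k valleys; that is, v_{n,m,k} = v_{n,n−m,n−k}. -/

import Mathlib

/-- The height of a path (list of steps; `true` = up step `U`, `false` = down step `D`)
after all its steps: #U − #D. -/
def height (l : List Bool) : ℤ := (l.count true : ℤ) - (l.count false : ℤ)

/-- `l` is a Dyck path of semilength `n`: `2n` steps ending at height `0`
(equivalently, exactly `n` up steps). It may go below the x-axis. -/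
def IsDyck (n : ℕ) (l : List Bool) : Prop := l.length = 2 * n ∧ l.count true = n

/-- The number of flaws: up steps starting at negative height. -/
def flaws (l : List Bool) : ℕ :=
  ((Finset.range l.length).filter
    (fun i => l.getD i false = true ∧ height (l.take i) < 0)).card

/-- The number of peaks: positions where an up step is immediately followed by a down step. -/
def peaks (l : List Bool) : ℕ :=
  ((Finset.range (l.length - 1)).filter
    (fun i => l.getD i false = true ∧ l.getD (i + 1) false = false)).card

/-- The number of valleys: positions where a down step is immediately followed by an up step. -/
def valleys (l : List Bool) : ℕ :=
  ((Finset.range (l.length - 1)).filter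
    (fun i => l.getD i false = false ∧ l.getD (i + 1) false = true)).card

/-- The number of double ascents: positions of two consecutive up steps. -/
def dascents (l : List Bool) : ℕ :=
  ((Finset.range (l.length - 1)).filter
    (fun i => l.getD i false = true ∧ l.getD (i + 1) false = true)).card

/-- The number of double descents: positions of two consecutive down steps. -/
def ddescents (l : List Bool) : ℕ :=
  ((Finset.range (l.length - 1)).filter
    (fun i => l.getD i false = false ∧ l.getD (i + 1) false = false)).card

/-- `p n m k`: the number of Dyck paths of semilength `n` with `m` flaws and `k` peaks. -/
noncomputable def p (n m k : ℕ) : ℕ :=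
  Nat.card {l : List Bool // IsDyck n l ∧ flaws l = m ∧ peaks l = k}

/-- `v n m k`: the number of Dyck paths of semilength `n` with `m` flaws and `k` valleys. -/
noncomputable def v (n m k : ℕ) : ℕ :=
  Nat.card {l : List Bool // IsDyck n l ∧ flaws l = m ∧ valleys l = k}

/-- `a n m k`: the number of Dyck paths of semilength `n` with `m` flaws and `k` double ascents. -/
noncomputable def a (n m k : ℕ) : ℕ :=
  Nat.card {l : List Bool // IsDyck n l ∧ flaws l = m ∧ dascents l = k}

/-- `d n m k`: the number of Dyck paths of semilength `n` with `m` flaws and `k` double descents. -/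
noncomputable def d (n m k : ℕ) : ℕ :=
  Nat.card {l : List Bool // IsDyck n l ∧ flaws l = m ∧ ddescents l = k}

/-- valley indicators on up steps: `p` is the previous step (`true` at the start). -/
def encA : Bool → List Bool → List Bool
  | _, [] => []
  | p, true :: t => (!p) :: encA true t
  | _, false :: t => encA false t

/-- valley indicators on down steps: whether the next step is up. -/
def encB : List Bool → List Bool
  | [] => []
  | true :: t => encB t
  | false :: t => t.headI :: encB t

/-- decode a path from its valley-indicator pair. -/
def dec : List Bool → List Bool → List Bool
  | [], β => List.replicate β.length false
  | false :: α, β => true :: dec α β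
  | true :: α, β =>
      β.takeWhile (fun b => !b) ++ false :: true :: dec α ((β.dropWhile (fun b => !b)).drop 1)

def frec : ℕ → ℕ → List Bool → ℕ
  | _, _, [] => 0
  | u, d, true :: t => (if u < d then 1 else 0) + frec (u + 1) d t
  | u, d, false :: t => frec u (d + 1) t

def Fc (u d : ℕ) (α β : List Bool) : ℕ :=
  ((Finset.range α.length).filter
    (fun i => u + i < d ∨ (β.take (u + i - d)).count true < (α.take (i + 1)).count true)).card

-- basic counting lemmas
lemma count_add_count (l : List Bool) : l.count true + l.count false = l.length := by
  induction l with
  | nil => simp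
  | cons b t ih => cases b <;> simp [List.count_cons] <;> omega

lemma count_map_not (l : List Bool) : (l.map not).count true = l.length - l.count true := by
  induction l with
  | nil => simp
  | cons b t ih =>
    have := List.count_le_length (a := true) (l := t)
    cases b <;> simp [List.count_cons, ih] <;> omega

lemma height_cons (b : Bool) (t : List Bool) :
    height (b :: t) = (if b then 1 else -1) + height t := by
  cases b <;> simp [height, List.count_cons] <;> ring

lemma filter_range_succ (P : ℕ → Prop) [DecidablePred P] (m : ℕ) :
    ((Finset.range (m + 1)).filter P).card
      = (if P 0 then 1 else 0) + ((Finset.range m).filter (fun i => P (i + 1))).card := by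
  rw [Finset.card_filter, Finset.card_filter, Finset.sum_range_succ']
  omega

-- valleys recursion
lemma valleys_nil : valleys [] = 0 := by simp [valleys]

lemma valleys_single (s : Bool) : valleys [s] = 0 := by simp [valleys]

lemma valleys_cons (s u : Bool) (t : List Bool) :
    valleys (s :: u :: t) = (if s = false ∧ u = true then 1 else 0) + valleys (u :: t) := by
  have h1 : (s :: u :: t).length - 1 = t.length + 1 := by simp
  have h2 : (u :: t).length - 1 = t.length := by simp
  rw [valleys, valleys, h1, h2, filter_range_succ]
  simp [List.getD_cons_zero, List.getD_cons_succ]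

lemma valleys_cons_true (t : List Bool) : valleys (true :: t) = valleys t := by
  cases t with
  | nil => simp [valleys]
  | cons u t' => rw [valleys_cons]; simp

lemma valleys_cons_false (t : List Bool) :
    valleys (false :: t) = (if t.headI = true then 1 else 0) + valleys t := by
  cases t with
  | nil => simp [valleys, List.headI]
  | cons u t' => rw [valleys_cons]; simp [List.headI]; cases u <;> rfl

lemma count_encA (l : List Bool) (p : Bool) :
    (encA p l).count true
      = valleys l + (if p = false ∧ l.headI = true then 1 else 0) := by
  induction l generalizing p with
  | nil => simp [encA, valleys_nil]
  | cons s t ih =>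
    cases s with
    | true =>
      rw [encA]
      cases p <;>
        simp [List.count_cons, ih true, valleys_cons_true, List.headI] <;> omega
    | false =>
      rw [encA, ih false, valleys_cons_false]
      rcases t with _ | ⟨_ | _, t'⟩ <;> simp [List.headI] <;> omega

lemma count_encB (l : List Bool) : (encB l).count true = valleys l := by
  induction l with
  | nil => simp [encB, valleys_nil]
  | cons s t ih =>
    cases s with
    | true => rw [encB, ih, valleys_cons_true]
    | false =>
      rw [encB, valleys_cons_false, ← ih]
      cases h : t.headI <;> simp [List.count_cons, h] <;> omega

-- flaws = frec 0 0
lemma frec_eq (l : List Bool) : ∀ u d : ℕ, frec u d l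
    = ((Finset.range l.length).filter
        (fun i => l.getD i false = true ∧ (u : ℤ) - (d : ℤ) + height (l.take i) < 0)).card := by
  induction l with
  | nil => intro u d; simp [frec]
  | cons s t ih =>
    intro u d
    rw [List.length_cons, filter_range_succ]
    have h0 : ((s :: t).getD 0 false = true ∧ (u : ℤ) - d + height ((s :: t).take 0) < 0)
        ↔ (s = true ∧ u < d) := by
      simp only [List.take_zero, List.getD_cons_zero]
      have : height [] = 0 := by simp [height]
      rw [this]
      constructor
      · rintro ⟨h1, h2⟩; exact ⟨h1, by omega⟩
      · rintro ⟨h1, h2⟩; exact ⟨h1, by omega⟩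
    rw [if_congr h0 rfl rfl]
    cases s with
    | true =>
      rw [frec, ih (u + 1) d]
      rw [if_congr (show (true = true ∧ u < d) ↔ (u < d) by simp) rfl rfl]
      congr 1
      apply congrArg
      apply Finset.filter_congr
      intro i _
      simp only [List.getD_cons_succ, List.take_succ_cons, height_cons, if_pos rfl, eq_iff_iff]
      push_cast
      constructor
      · rintro ⟨h1, h2⟩; exact ⟨h1, by omega⟩
      · rintro ⟨h1, h2⟩; exact ⟨h1, by omega⟩
    | false =>
      rw [frec, ih u (d + 1)]
      rw [if_congr (show (false = true ∧ u < d) ↔ False by simp) rfl rfl, if_false, zero_add]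
      apply congrArg
      apply Finset.filter_congr
      intro i _
      simp only [List.getD_cons_succ, List.take_succ_cons, height_cons, if_neg (show ¬(false = true) by simp), eq_iff_iff]
      push_cast
      constructor
      · rintro ⟨h1, h2⟩; exact ⟨h1, by omega⟩
      · rintro ⟨h1, h2⟩; exact ⟨h1, by omega⟩

lemma flaws_eq_frec (l : List Bool) : flaws l = frec 0 0 l := by
  rw [flaws, frec_eq l 0 0]
  apply congrArg
  apply Finset.filter_congr
  intro i _
  norm_num

-- run decomposition lemmas
lemma exists_decomp (l : List Bool) (h : 0 < l.count true) :
    ∃ j t, l = List.replicate j false ++ true :: t := by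
  induction l with
  | nil => simp at h
  | cons s t ih =>
    cases s with
    | true => exact ⟨0, t, rfl⟩
    | false =>
      have : 0 < t.count true := by simpa [List.count_cons] using h
      obtain ⟨j, t', ht⟩ := ih this
      exact ⟨j + 1, t', by rw [List.replicate_succ, List.cons_append, ht]⟩

lemma all_false (l : List Bool) (h : l.count true = 0) : l = List.replicate l.length false := by
  induction l with
  | nil => simp
  | cons s t ih =>
    cases s with
    | true => simp [List.count_cons] at h
    | false =>
      have : t.count true = 0 := by simpa [List.count_cons] using h
      rw [List.length_cons, List.replicate_succ]
      conv_lhs => rw [ih this]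

lemma tw_lem (j : ℕ) (t : List Bool) :
    (List.replicate j false ++ true :: t).takeWhile (fun b => !b) = List.replicate j false := by
  induction j with
  | zero => simp [List.takeWhile]
  | succ j ih =>
    rw [List.replicate_succ, List.cons_append, List.takeWhile_cons]
    simp [ih, List.replicate_succ]

lemma dw_lem (j : ℕ) (t : List Bool) :
    (List.replicate j false ++ true :: t).dropWhile (fun b => !b) = true :: t := by
  induction j with
  | zero => simp [List.dropWhile]
  | succ j ih => rw [List.replicate_succ, List.cons_append, List.dropWhile_cons]; simpa

lemma dec_true_case (α : List Bool) (j : ℕ) (β' : List Bool) :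
    dec (true :: α) (List.replicate j false ++ true :: β')
      = List.replicate (j + 1) false ++ true :: dec α β' := by
  rw [dec, tw_lem, dw_lem, List.replicate_succ', List.drop_one, List.tail_cons]
  simp

lemma encA_false_run (j : ℕ) (t : List Bool) :
    encA false (List.replicate j false ++ true :: t) = true :: encA true t := by
  induction j with
  | zero => simp [encA]
  | succ j ih => rw [List.replicate_succ, List.cons_append, encA]; exact ih

lemma encA_true_run (j : ℕ) (t : List Bool) :
    encA true (List.replicate (j + 1) false ++ true :: t) = true :: encA true t := by
  rw [List.replicate_succ, List.cons_append, encA, encA_false_run]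

lemma encB_run (j : ℕ) (t : List Bool) :
    encB (List.replicate (j + 1) false ++ true :: t)
      = List.replicate j false ++ true :: encB t := by
  induction j with
  | zero => simp [encB, List.headI]
  | succ j ih =>
    rw [List.replicate_succ (n := j + 1), List.cons_append, encB, ih]
    simp [List.headI, List.replicate_succ]

lemma encA_replicate (m : ℕ) (p : Bool) : encA p (List.replicate m false) = [] := by
  induction m generalizing p with
  | zero => simp [encA]
  | succ m ih => rw [List.replicate_succ, encA]; exact ih false

lemma encB_replicate (m : ℕ) : encB (List.replicate m false) = List.replicate m false := by
  induction m with
  | zero => simp [encB]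
  | succ m ih =>
    rw [List.replicate_succ, encB, ih]
    congr 1
    cases m <;> simp [List.headI, List.replicate_succ]

lemma count_replicate_false (m : ℕ) : (List.replicate m false).count true = 0 := by
  simp [List.count_replicate]

lemma dec_length (α : List Bool) : ∀ β : List Bool,
    α.count true ≤ β.count true → (dec α β).length = α.length + β.length := by
  induction α with
  | nil => intro β _; simp [dec]
  | cons s α ih =>
    intro β hc
    cases s with
    | false =>
      rw [dec, List.length_cons, ih β (by simpa [List.count_cons] using hc)]
      simp; omega
    | true =>
      have hβ : 0 < β.count true := by
        have : 0 < (true :: α).count true := by simp [List.count_cons]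
        omega
      obtain ⟨j, β', hd⟩ := exists_decomp β hβ
      subst hd
      rw [dec_true_case]
      have hc' : α.count true ≤ β'.count true := by
        simp [List.count_cons, List.count_append, count_replicate_false] at hc ⊢
        omega
      simp only [List.length_append, List.length_cons, List.length_replicate, ih β' hc']
      omega

lemma dec_count (α : List Bool) : ∀ β : List Bool,
    α.count true ≤ β.count true → (dec α β).count true = α.length := by
  induction α with
  | nil => intro β _; simp [dec, count_replicate_false]
  | cons s α ih =>
    intro β hc
    cases s with
    | false =>
      rw [dec, List.count_cons, ih β (by simpa [List.count_cons] using hc)]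
      simp
    | true =>
      have hβ : 0 < β.count true := by
        have : 0 < (true :: α).count true := by simp [List.count_cons]
        omega
      obtain ⟨j, β', hd⟩ := exists_decomp β hβ
      subst hd
      rw [dec_true_case]
      have hc' : α.count true ≤ β'.count true := by
        simp [List.count_cons, List.count_append, count_replicate_false] at hc ⊢
        omega
      rw [List.count_append, List.count_cons, ih β' hc']
      simp [count_replicate_false]

lemma dec_enc_aux : ∀ (N : ℕ) (l : List Bool), l.length ≤ N →
    dec (encA true l) (encB l) = l := by
  intro N
  induction N with
  | zero =>
    intro l hl
    have : l = [] := List.length_eq_zero_iff.mp (by omega)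
    subst this
    simp [encA, encB, dec]
  | succ N ih =>
  intro l hN
  match l with
  | [] => simp [encA, encB, dec]
  | true :: t =>
    rw [encA, encB, Bool.not_true, dec]
    rw [ih t (by simp at hN; omega)]
  | false :: t =>
    by_cases hc : (false :: t).count true = 0
    · rw [all_false _ hc]
      rw [encA_replicate, encB_replicate, dec]
      simp
    · obtain ⟨j, t', hd⟩ := exists_decomp (false :: t) (Nat.pos_of_ne_zero hc)
      have hj : j ≠ 0 := by
        intro h; subst h; simp at hd
      obtain ⟨j', rfl⟩ : ∃ j', j = j' + 1 := ⟨j - 1, by omega⟩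
      rw [hd, encA_true_run, encB_run, dec_true_case]
      have hlt : t'.length < (false :: t).length := by
        rw [hd]; simp [List.length_replicate]; omega
      rw [ih t' (by simp at hN hlt ⊢; omega)]

lemma dec_enc (l : List Bool) : dec (encA true l) (encB l) = l :=
  dec_enc_aux l.length l le_rfl

lemma enc_dec (α : List Bool) : ∀ β : List Bool, α.count true = β.count true →
    encA true (dec α β) = α ∧ encB (dec α β) = β := by
  induction α with
  | nil =>
    intro β hc
    rw [dec]
    have hβ : β = List.replicate β.length false := all_false β (by simp at hc; omega)
    constructor
    · rw [encA_replicate]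
    · rw [encB_replicate, ← hβ]
  | cons s α ih =>
    intro β hc
    cases s with
    | false =>
      rw [dec]
      obtain ⟨h1, h2⟩ := ih β (by simpa [List.count_cons] using hc)
      rw [encA, encB, h1, h2, Bool.not_true]
      exact ⟨rfl, rfl⟩
    | true =>
      have hβ : 0 < β.count true := by
        rw [← hc]; simp [List.count_cons]
      obtain ⟨j, β', hd⟩ := exists_decomp β hβ
      subst hd
      rw [dec_true_case]
      have hc' : α.count true = β'.count true := by
        simp [List.count_cons, List.count_append, count_replicate_false] at hc ⊢
        omega
      obtain ⟨h1, h2⟩ := ih β' hc'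
      constructor
      · rw [encA_true_run, h1]
      · rw [encB_run, h2]

lemma frec_replicate_append (m : ℕ) : ∀ (u d : ℕ) (X : List Bool),
    frec u d (List.replicate m false ++ X) = frec u (d + m) X := by
  induction m with
  | zero => intro u d X; simp [frec]
  | succ m ih =>
    intro u d X
    rw [List.replicate_succ, List.cons_append, frec, ih]
    congr 1
    omega

lemma count_take_run (j : ℕ) (β' : List Bool) : ∀ m : ℕ,
    ((List.replicate j false ++ true :: β').take m).count true
      = if m ≤ j then 0 else 1 + (β'.take (m - j - 1)).count true := by
  induction j with
  | zero =>
    intro m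
    cases m with
    | zero => simp
    | succ m => simp [List.take_succ_cons, List.count_cons]; omega
  | succ j ih =>
    intro m
    cases m with
    | zero => simp
    | succ m =>
      rw [List.replicate_succ, List.cons_append, List.take_succ_cons, List.count_cons, ih m]
      norm_num
      by_cases h : m ≤ j
      · rw [if_pos h, if_pos (by omega)]
      · rw [if_neg h, if_neg (by omega)]
        have : m - j - 1 = m + 1 - (j + 1) - 1 := by omega
        rw [this]

lemma BR (α : List Bool) : ∀ (β : List Bool) (u d : ℕ),
    α.count true ≤ β.count true → frec u d (dec α β) = Fc u d α β := by
  induction α with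
  | nil =>
    intro β u d _
    rw [dec, Fc]
    have := frec_replicate_append β.length u d []
    simp only [List.append_nil] at this
    rw [this]
    simp [frec, Fc]
  | cons s α ih =>
    intro β u d hc
    cases s with
    | false =>
      rw [dec, frec, ih β u.succ d (by simpa [List.count_cons] using hc)]
      rw [Fc, Fc, List.length_cons, filter_range_succ]
      have h0 : (u + 0 < d ∨ (β.take (u + 0 - d)).count true < (((false :: α).take 1).count true))
          ↔ u < d := by
        simp [List.count_cons]
      rw [if_congr h0 rfl rfl]
      congr 1
      apply congrArg
      apply Finset.filter_congr
      intro i _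
      simp only [List.take_succ_cons, List.count_cons, eq_iff_iff]
      have e1 : u + 1 + i = u + (i + 1) := by omega
      rw [e1]
      simp
    | true =>
      have hβ : 0 < β.count true := by
        have : 0 < (true :: α).count true := by simp [List.count_cons]
        omega
      obtain ⟨j, β', hd⟩ := exists_decomp β hβ
      subst hd
      have hc' : α.count true ≤ β'.count true := by
        simp [List.count_cons, List.count_append, count_replicate_false] at hc ⊢
        omega
      rw [dec_true_case, frec_replicate_append, frec, ih β' (u + 1) (d + (j + 1)) hc']
      rw [Fc, Fc, List.length_cons, filter_range_succ]
      have h0 : (u + 0 < d ∨ (((List.replicate j false ++ true :: β').take (u + 0 - d)).count true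
            < (((true :: α).take 1).count true)))
          ↔ u < d + (j + 1) := by
        rw [count_take_run]
        simp only [Nat.add_zero, List.take_succ_cons, List.take_zero, List.count_cons,
          List.count_nil]
        by_cases h : u - d ≤ j
        · rw [if_pos h]; simp; omega
        · rw [if_neg h]; simp; omega
      rw [if_congr h0 rfl rfl]
      congr 1
      apply congrArg
      apply Finset.filter_congr
      intro i _
      simp only [List.take_succ_cons, List.count_cons, eq_iff_iff]
      rw [count_take_run]
      rw [show u + (i + 1) - d - j - 1 = u + 1 + i - (d + (j + 1)) from by omega]
      simp only [beq_self_eq_true, if_true]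
      by_cases hm : u + (i + 1) - d ≤ j
      · rw [if_pos hm]
        constructor
        · intro _; right; omega
        · intro _; left; omega
      · rw [if_neg hm]
        constructor
        · intro h
          rcases h with h | h
          · right; omega
          · right; omega
        · intro h
          rcases h with h | h
          · left; omega
          · right; omega

lemma Fc_le (α β : List Bool) (u d : ℕ) : Fc u d α β ≤ α.length := by
  rw [Fc]
  exact le_trans (Finset.card_filter_le _ _) (by simp)

lemma Fc_compl (n : ℕ) (α β : List Bool) (hα : α.length = n) (hβ : β.length = n) :
    Fc 0 0 (α.map not) (β.map not) = n - Fc 0 0 α β := by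
  have hlen : (α.map not).length = n := by simp [hα]
  rw [Fc, Fc, hlen, hα]
  have key : ∀ i ∈ Finset.range n,
      ((0 + i < 0 ∨ ((β.map not).take (0 + i - 0)).count true
          < ((α.map not).take (i + 1)).count true))
      ↔ ¬(0 + i < 0 ∨ (β.take (0 + i - 0)).count true < (α.take (i + 1)).count true) := by
    intro i hi
    rw [Finset.mem_range] at hi
    simp only [Nat.zero_add, Nat.sub_zero]
    rw [← List.map_take, ← List.map_take, count_map_not, count_map_not]
    have l1 : (β.take i).length = i := by rw [List.length_take]; omega
    have l2 : (α.take (i + 1)).length = i + 1 := by rw [List.length_take]; omega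
    have c1 := List.count_le_length (a := true) (l := β.take i)
    have c2 := List.count_le_length (a := true) (l := α.take (i + 1))
    rw [l1, l2]
    omega
  rw [Finset.filter_congr key]
  have h2 := Finset.card_filter_add_card_filter_not
    (s := Finset.range n)
    (fun i => (0 + i < 0 ∨ (β.take (0 + i - 0)).count true < (α.take (i + 1)).count true))
  rw [Finset.card_range] at h2
  omega

lemma encA_length (l : List Bool) : ∀ p, (encA p l).length = l.count true := by
  induction l with
  | nil => intro p; simp [encA]
  | cons s t ih =>
    intro p
    cases s with
    | true => rw [encA]; simp [List.count_cons, ih true]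
    | false => rw [encA]; simp [List.count_cons, ih false]

lemma encB_length (l : List Bool) : (encB l).length = l.count false := by
  induction l with
  | nil => simp [encB]
  | cons s t ih =>
    cases s with
    | true => rw [encB]; simp [List.count_cons, ih]
    | false => rw [encB]; simp [List.count_cons, ih]

lemma map_not_not (l : List Bool) : (l.map not).map not = l := by
  simp [List.map_map, Function.comp_def]

/-- The reciprocity involution. -/
def Phi (l : List Bool) : List Bool := dec ((encA true l).map not) ((encB l).map not)

lemma main_props (n : ℕ) (l : List Bool) (hl : IsDyck n l) :
    IsDyck n (Phi l) ∧ flaws (Phi l) = n - flaws l ∧ valleys (Phi l) = n - valleys l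
      ∧ Phi (Phi l) = l ∧ flaws l ≤ n ∧ valleys l ≤ n := by
  obtain ⟨hlen, hcnt⟩ := hl
  set α := encA true l with hα
  set β := encB l with hβ
  have hαlen : α.length = n := by rw [hα, encA_length l true, hcnt]
  have hβlen : β.length = n := by
    rw [hβ, encB_length l]
    have := count_add_count l
    omega
  have hcα : α.count true = valleys l := by
    rw [hα, count_encA l true]; simp
  have hcβ : β.count true = valleys l := by rw [hβ, count_encB l]
  have hk : valleys l ≤ n := by
    rw [← hcα, ← hαlen]; exact List.count_le_length (a := true) (l := α)
  have hflaws : flaws l = Fc 0 0 α β := by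
    rw [flaws_eq_frec]
    conv_lhs => rw [← dec_enc l]
    exact BR α β 0 0 (by rw [hcα, hcβ])
  have hm : flaws l ≤ n := by rw [hflaws, ← hαlen]; exact Fc_le α β 0 0
  have hcα' : (α.map not).count true = n - valleys l := by
    rw [count_map_not, hαlen, hcα]
  have hcβ' : (β.map not).count true = n - valleys l := by
    rw [count_map_not, hβlen, hcβ]
  have hcc : (α.map not).count true = (β.map not).count true := by rw [hcα', hcβ']
  obtain ⟨hA, hB⟩ := enc_dec (α.map not) (β.map not) hcc
  have hPhi : Phi l = dec (α.map not) (β.map not) := rfl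
  refine ⟨⟨?_, ?_⟩, ?_, ?_, ?_, hm, hk⟩
  · rw [hPhi, dec_length _ _ hcc.le]
    simp [hαlen, hβlen]
    omega
  · rw [hPhi, dec_count _ _ hcc.le]
    simp [hαlen]
  · rw [hPhi, flaws_eq_frec, BR _ _ 0 0 hcc.le,
      Fc_compl n α β hαlen hβlen, hflaws]
  · have : valleys (Phi l) = (encA true (Phi l)).count true := by
      rw [count_encA]; simp
    rw [this, hPhi, hA, hcα']
  · show dec ((encA true (Phi l)).map not) ((encB (Phi l)).map not) = l
    rw [hPhi, hA, hB, map_not_not, map_not_not]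
    exact dec_enc l


/-- The reciprocity theorem for valleys: `v n m k = v n (n-m) (n-k)`. -/
theorem valley_reciprocity (n m k : ℕ) (hn : 1 ≤ n) (hm : m ≤ n) (hk : k ≤ n) :
    v n m k = v n (n - m) (n - k) := by
  unfold v
  apply Nat.card_congr
  refine ⟨fun x => ⟨Phi x.1, ?_⟩, fun y => ⟨Phi y.1, ?_⟩, ?_, ?_⟩
  · obtain ⟨hd, hf, hv, _, _, _⟩ := main_props n x.1 x.2.1
    exact ⟨hd, by rw [hf, x.2.2.1], by rw [hv, x.2.2.2]⟩
  · obtain ⟨hd, hf, hv, _, _, _⟩ := main_props n y.1 y.2.1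
    refine ⟨hd, ?_, ?_⟩
    · rw [hf, y.2.2.1]; omega
    · rw [hv, y.2.2.2]; omega
  · intro x
    apply Subtype.ext
    exact (main_props n x.1 x.2.1).2.2.2.1
  · intro y
    apply Subtype.ext
    exact (main_props n y.1 y.2.1).2.2.2.1
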